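/- With the construction below: if there is no index j ∈ {1,…,n} with α_j = β_j = 1, then ED(x1 ∘ x2, y) ≥ 7n − 2. -/

import Mathlib

open List

/- `levenshtein` and `Levenshtein.defaultCost` were removed from Mathlib; they are
restored here with their old definitions (Mathlib.Data.List.EditDistance.Defs). -/
structure Levenshtein.Cost (α β δ : Type*) where
  delete : α → δ
  insert : β → δ
  substitute : α → β → δ

def Levenshtein.defaultCost {α : Type*} [DecidableEq α] : Levenshtein.Cost α α ℕ where
  delete _ := 1
  insert _ := 1
  substitute a b := if a = b then 0 else 1

def Levenshtein.impl {α β δ : Type*} [AddZeroClass δ] [Min δ] (C : Levenshtein.Cost α β δ)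
    (xs : List α) (y : β) (d : {r : List δ // 0 < r.length}) :
    {r : List δ // 0 < r.length} :=
  let ⟨ds, w⟩ := d
  xs.zip (ds.zip ds.tail) |>.foldr
    (init := ⟨[C.insert y + ds.getLast (List.length_pos_iff.mp w)], by simp⟩)
    (fun ⟨x, d₀, d₁⟩ ⟨r, w⟩ =>
      ⟨min (C.delete x + r[0]) (min (C.insert y + d₀) (C.substitute x y + d₁)) :: r, by simp⟩)

def suffixLevenshtein {α β δ : Type*} [AddZeroClass δ] [Min δ] (C : Levenshtein.Cost α β δ)
    (xs : List α) (ys : List β) : {r : List δ // 0 < r.length} :=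
  ys.foldr
    (Levenshtein.impl C xs)
    (xs.foldr (init := ⟨[0], by simp⟩) (fun a ⟨r, w⟩ => ⟨(C.delete a + r[0]) :: r, by simp⟩))

def levenshtein {α β δ : Type*} [AddZeroClass δ] [Min δ] (C : Levenshtein.Cost α β δ)
    (xs : List α) (ys : List β) : δ :=
  let ⟨r, _⟩ := suffixLevenshtein C xs ys
  r[0]

/-- Edit distance: minimum number of single-symbol insertions, deletions and
substitutions needed to transform `u` into `v` (Levenshtein distance with unit costs). -/
def ED {α : Type*} [DecidableEq α] (u v : List α) : ℕ :=
  levenshtein Levenshtein.defaultCost u v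

/- The alphabet `{1,…,6n} ∪ {a}` is modelled inside `ℕ`, with the special symbol `a := 0`
(distinct from all the integer symbols `1,…,6n`).  Indices of `α, β ∈ {0,1}^n` are
`0`-based: `α_j` (`1 ≤ j ≤ n`) is `a (j-1)`. -/

/-- `α' ∈ {0,1}^{2n}` (0-based): `α'_{2j−1} = α_j`, `α'_{2j} = 1 − α_j`. -/
def alphaP (a : ℕ → Bool) (j : ℕ) : Bool :=
  if j % 2 = 0 then a (j / 2) else !a (j / 2)

/-- `β' ∈ {0,1}^{2n}` (0-based): `β'_{2j−1} = 1 − β_j`, `β'_{2j} = β_j`. -/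
def betaP (b : ℕ → Bool) (j : ℕ) : Bool :=
  if j % 2 = 0 then !b (j / 2) else b (j / 2)

/-- `x1 ∈ Σ^{4n}` : for `j ∈ {1,…,2n}`, the `(2j−1)`-th symbol is `3j−2` and the `(2j)`-th
symbol is `3j−1` if `α'_j = 1`, and `a` (here `0`) otherwise. -/
def x1 (n : ℕ) (a : ℕ → Bool) : List ℕ :=
  ((List.range (2 * n)).map fun j =>
    [3 * (j + 1) - 2, if alphaP a j then 3 * (j + 1) - 1 else 0]).flatten

/-- `x2 ∈ Σ^{4n}` : for `j ∈ {1,…,2n}`, the `(2j−1)`-th symbol is `3j−1` if `β'_j = 1`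
(and `a`, here `0`, otherwise), and the `(2j)`-th symbol is `3j`. -/
def x2 (n : ℕ) (b : ℕ → Bool) : List ℕ :=
  ((List.range (2 * n)).map fun j =>
    [if betaP b j then 3 * (j + 1) - 1 else 0, 3 * (j + 1)]).flatten

/-- `y = (1, 2, …, 6n)`. -/
def ystr (n : ℕ) : List ℕ := List.range' 1 (6 * n)

section LevHelpers

variable {α β δ : Type*} [AddZeroClass δ] [Min δ] (C : Levenshtein.Cost α β δ)

@[simp] theorem Levenshtein.defaultCost_delete' {γ : Type*} [DecidableEq γ] (x : γ) :
    (Levenshtein.defaultCost : Levenshtein.Cost γ γ ℕ).delete x = 1 := rfl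

@[simp] theorem Levenshtein.defaultCost_insert' {γ : Type*} [DecidableEq γ] (x : γ) :
    (Levenshtein.defaultCost : Levenshtein.Cost γ γ ℕ).insert x = 1 := rfl

@[simp] theorem Levenshtein.defaultCost_substitute' {γ : Type*} [DecidableEq γ] (x y : γ) :
    (Levenshtein.defaultCost : Levenshtein.Cost γ γ ℕ).substitute x y = if x = y then 0 else 1 := rfl

theorem Lev_impl_cons (x : α) (xs : List α) (y : β) (d : δ) (ds : List δ)
    (w : 0 < (d :: ds).length) (w' : 0 < ds.length) :
    Levenshtein.impl C (x :: xs) y ⟨d :: ds, w⟩ =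
      ⟨min (C.delete x + (Levenshtein.impl C xs y ⟨ds, w'⟩).1[0]'(Levenshtein.impl C xs y ⟨ds, w'⟩).2)
        (min (C.insert y + d) (C.substitute x y + ds[0])) :: (Levenshtein.impl C xs y ⟨ds, w'⟩).1,
        by simp⟩ :=
  match ds, w' with | _ :: _, _ => rfl

theorem lev_eq_S (xs : List α) (ys : List β) :
    levenshtein C xs ys = (suffixLevenshtein C xs ys).1[0]'(suffixLevenshtein C xs ys).2 := rfl

theorem S_cons_ex (x : α) (xs : List α) (ys : List β) :
    ∃ d, (suffixLevenshtein C (x :: xs) ys).1 = d :: (suffixLevenshtein C xs ys).1 := by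
  induction ys with
  | nil => exact ⟨_, rfl⟩
  | cons y ys ih =>
    obtain ⟨d, hd⟩ := ih
    have e : suffixLevenshtein C (x :: xs) ys = ⟨d :: (suffixLevenshtein C xs ys).1, by simp⟩ :=
      Subtype.ext hd
    rw [show suffixLevenshtein C (x :: xs) (y :: ys)
      = Levenshtein.impl C (x :: xs) y (suffixLevenshtein C (x :: xs) ys) from rfl, e,
      Lev_impl_cons (w' := (suffixLevenshtein C xs ys).2)]
    exact ⟨_, rfl⟩

theorem S_nil_ex (ys : List β) : ∃ d, (suffixLevenshtein C ([] : List α) ys).1 = [d] := by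
  induction ys with
  | nil => exact ⟨_, rfl⟩
  | cons y ys _ => exact ⟨_, rfl⟩

@[simp] theorem levenshtein_nil_nil : levenshtein C ([] : List α) ([] : List β) = 0 := rfl

@[simp] theorem levenshtein_cons_nil (x : α) (xs : List α) :
    levenshtein C (x :: xs) ([] : List β) = C.delete x + levenshtein C xs [] := rfl

@[simp] theorem levenshtein_nil_cons (y : β) (ys : List β) :
    levenshtein C ([] : List α) (y :: ys) = C.insert y + levenshtein C [] ys := by
  obtain ⟨d, hd⟩ := S_nil_ex C (α := α) ys
  have h1 : levenshtein C ([] : List α) ys = d := by rw [lev_eq_S]; simp [hd]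
  have h2 : levenshtein C ([] : List α) (y :: ys)
      = C.insert y + (suffixLevenshtein C ([] : List α) ys).1.getLast
          (List.length_pos_iff.mp (suffixLevenshtein C ([] : List α) ys).2) := rfl
  rw [h2, h1]; simp [hd]

@[simp] theorem levenshtein_cons_cons (x : α) (xs : List α) (y : β) (ys : List β) :
    levenshtein C (x :: xs) (y :: ys) =
      min (C.delete x + levenshtein C xs (y :: ys))
        (min (C.insert y + levenshtein C (x :: xs) ys) (C.substitute x y + levenshtein C xs ys)) := by
  obtain ⟨d, hd⟩ := S_cons_ex C x xs ys
  have e : suffixLevenshtein C (x :: xs) ys = ⟨d :: (suffixLevenshtein C xs ys).1, by simp⟩ :=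
    Subtype.ext hd
  have hd0 : levenshtein C (x :: xs) ys = d := by rw [lev_eq_S]; simp [hd]
  rw [hd0, lev_eq_S C (x :: xs), show suffixLevenshtein C (x :: xs) (y :: ys)
      = Levenshtein.impl C (x :: xs) y (suffixLevenshtein C (x :: xs) ys) from rfl, e,
      Lev_impl_cons (w' := (suffixLevenshtein C xs ys).2)]
  rfl

end LevHelpers

set_option linter.unusedSectionVars false

variable {α : Type*} [DecidableEq α]

lemma ED_nil_left (v : List α) : ED ([] : List α) v = v.length := by
  induction v with
  | nil => simp [ED]
  | cons y ys ih => simp only [ED, levenshtein_nil_cons] at *; simp [ih]; omega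

lemma ED_nil_right (u : List α) : ED u [] = u.length := by
  induction u with
  | nil => simp [ED]
  | cons x xs ih => simp only [ED, levenshtein_cons_nil] at *; simp [ih]; omega

lemma ED_cons_cons (x y : α) (u v : List α) :
    ED (x :: u) (y :: v) =
      min (1 + ED u (y :: v)) (min (1 + ED (x :: u) v) ((if x = y then 0 else 1) + ED u v)) := by
  simp [ED, levenshtein_cons_cons]

lemma ED_eq_zero {u v : List α} (h : ED u v = 0) : u = v := by
  induction u generalizing v with
  | nil =>
    cases v with
    | nil => rfl
    | cons y ys => rw [ED_nil_left] at h; simp at h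
  | cons x xs ih =>
    cases v with
    | nil => rw [ED_nil_right] at h; simp at h
    | cons y ys =>
      rw [ED_cons_cons] at h
      simp only [Nat.min_eq_zero_iff] at h
      rcases h with h | h
      · omega
      rcases h with h | h
      · omega
      by_cases hxy : x = y
      · simp [hxy] at h
        exact hxy ▸ congrArg (x :: ·) (ih h)
      · simp [hxy] at h

lemma one_le_ED {u v : List α} (h : u ≠ v) : 1 ≤ ED u v := by
  rcases Nat.eq_zero_or_pos (ED u v) with h0 | h1
  · exact absurd (ED_eq_zero h0) h
  · exact h1

/-- delete step -/
lemma ED_cons_le (x : α) (u v : List α) : ED (x :: u) v ≤ 1 + ED u v := by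
  cases v with
  | nil => rw [ED_nil_right, ED_nil_right]; simp
  | cons y ys => rw [ED_cons_cons]; exact min_le_left _ _

/-- insert step -/
lemma ED_le_cons (y : α) (u v : List α) : ED u (y :: v) ≤ 1 + ED u v := by
  cases u with
  | nil => rw [ED_nil_left, ED_nil_left]; simp
  | cons x xs => rw [ED_cons_cons]; exact le_trans (min_le_right _ _) (min_le_left _ _)

/-- substitute step -/
lemma ED_cons_le_cons (x y : α) (u v : List α) :
    ED (x :: u) (y :: v) ≤ (if x = y then 0 else 1) + ED u v := by
  rw [ED_cons_cons]; exact le_trans (min_le_right _ _) (min_le_right _ _)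

lemma countP_cons_le (p : α → Bool) (a : α) (l : List α) :
    countP p (a :: l) ≤ countP p l + 1 := by
  rw [countP_cons]; split <;> omega

lemma countP_le_cons (p : α → Bool) (a : α) (l : List α) :
    countP p l ≤ countP p (a :: l) := by
  rw [countP_cons]; omega

/-- every symbol of `v` that does not occur in `u` costs at least one edit -/
lemma countP_notmem_le_ED : ∀ (v u : List α), countP (fun w => !(decide (w ∈ u))) v ≤ ED u v := by
  intro v
  induction v with
  | nil => intro u; simp
  | cons y ys ihv =>
    intro u
    induction u with
    | nil =>
      rw [ED_nil_left]
      exact countP_le_length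
    | cons x xs ihu =>
      rw [ED_cons_cons]
      have hmono : ∀ l : List α, countP (fun w => !(decide (w ∈ x :: xs))) l ≤
          countP (fun w => !(decide (w ∈ xs))) l := by
        intro l
        apply countP_mono_left
        intro w _ hw
        simp at hw ⊢; tauto
      have h1 := hmono (y :: ys)
      have h2 := ihu
      have h3 := ihv (x :: xs)
      have h4 := countP_cons_le (fun w => !(decide (w ∈ x :: xs))) y ys
      have h5 := hmono ys
      have h6 := ihv xs
      by_cases hxy : x = y
      · have hhead : countP (fun w => !(decide (w ∈ x :: xs))) (y :: ys)
            = countP (fun w => !(decide (w ∈ x :: xs))) ys := by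
          apply countP_cons_of_neg
          simp [hxy]
        rw [if_pos hxy]
        omega
      · rw [if_neg hxy]
        omega

/-- combined bound: unmatched `v`-symbols plus necessary deletions -/
lemma countP_add_length_le_ED : ∀ (v u : List α),
    countP (fun w => !(decide (w ∈ u))) v + u.length ≤ ED u v + v.length := by
  intro v
  induction v with
  | nil => intro u; rw [ED_nil_right]; simp
  | cons y ys ihv =>
    intro u
    induction u with
    | nil =>
      rw [ED_nil_left]
      have := countP_le_length (l := y :: ys) (p := fun w => !(decide (w ∈ ([] : List α))))
      simp only [length_nil]
      omega
    | cons x xs ihu =>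
      rw [ED_cons_cons]
      have hmono : ∀ l : List α, countP (fun w => !(decide (w ∈ x :: xs))) l ≤
          countP (fun w => !(decide (w ∈ xs))) l := by
        intro l
        apply countP_mono_left
        intro w _ hw
        simp at hw ⊢; tauto
      simp only [length_cons]
      have h1 := hmono (y :: ys)
      have h2 := ihu
      have h3 := ihv (x :: xs)
      have h4 := countP_cons_le (fun w => !(decide (w ∈ x :: xs))) y ys
      have h5 := hmono ys
      have h6 := ihv xs
      simp only [length_cons] at h2 h3 h6
      by_cases hxy : x = y
      · have hhead : countP (fun w => !(decide (w ∈ x :: xs))) (y :: ys)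
            = countP (fun w => !(decide (w ∈ x :: xs))) ys := by
          apply countP_cons_of_neg
          simp [hxy]
        rw [if_pos hxy]
        omega
      · rw [if_neg hxy]
        omega

/-- Splitting lemma: an optimal alignment of `u1 ++ u2` against `v` splits `v`. -/
lemma ED_append_split : ∀ (v u1 u2 : List α), ∃ v1 v2 : List α,
    v = v1 ++ v2 ∧ ED u1 v1 + ED u2 v2 ≤ ED (u1 ++ u2) v := by
  intro v
  induction v with
  | nil =>
    intro u1 u2
    refine ⟨[], [], by simp, ?_⟩
    rw [ED_nil_right, ED_nil_right, ED_nil_right]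
    simp
  | cons y ys ihv =>
    intro u1 u2
    induction u1 with
    | nil =>
      refine ⟨[], y :: ys, by simp, ?_⟩
      rw [ED_nil_right]
      simp
    | cons x xs ihu =>
      have hED : ED ((x :: xs) ++ u2) (y :: ys) =
          min (1 + ED (xs ++ u2) (y :: ys))
            (min (1 + ED ((x :: xs) ++ u2) ys) ((if x = y then 0 else 1) + ED (xs ++ u2) ys)) := by
        rw [cons_append, ED_cons_cons]
      rcases min_cases (1 + ED (xs ++ u2) (y :: ys))
          (min (1 + ED ((x :: xs) ++ u2) ys) ((if x = y then 0 else 1) + ED (xs ++ u2) ys))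
        with ⟨he, _⟩ | ⟨he, hle⟩
      · -- delete branch
        obtain ⟨v1, v2, hsplit, hineq⟩ := ihu
        refine ⟨v1, v2, hsplit, ?_⟩
        rw [hED, he]
        have := ED_cons_le x xs v1
        omega
      · rcases min_cases (1 + ED ((x :: xs) ++ u2) ys)
            ((if x = y then 0 else 1) + ED (xs ++ u2) ys) with ⟨he2, _⟩ | ⟨he2, _⟩
        · -- insert branch
          obtain ⟨v1, v2, hsplit, hineq⟩ := ihv (x :: xs) u2
          refine ⟨y :: v1, v2, by simp [hsplit], ?_⟩
          rw [hED, he, he2]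
          have := ED_le_cons y (x :: xs) v1
          omega
        · -- substitute branch
          obtain ⟨v1, v2, hsplit, hineq⟩ := ihv xs u2
          refine ⟨y :: v1, v2, by simp [hsplit], ?_⟩
          rw [hED, he, he2]
          have := ED_cons_le_cons x y xs v1
          omega

section Intervals

/-- an interval of length `L` has at most `ind1 + ind2` elements in `[g1,g2]` -/
lemma interval_countP_lower (g1 g2 : ℕ) : ∀ (L x : ℕ),
    L ≤ countP (fun w => !(decide (w ∈ [g1, g2]))) (range' x L)
      + (if g1 ∈ range' x L then 1 else 0) + (if g2 ∈ range' x L then 1 else 0) := by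
  intro L
  induction L with
  | zero => intro x; simp
  | succ L ih =>
    intro x
    have hcons : range' x (L + 1) = x :: range' (x + 1) L := by
      rw [range'_succ]
    rw [hcons]
    rw [countP_cons]
    have ihx := ih (x + 1)
    by_cases hx : x = g1 ∨ x = g2
    · have hpx : (if (!(decide (x ∈ [g1, g2]))) = true then 1 else 0 : ℕ) = 0 := by
        simp; tauto
      rw [hpx]
      rcases hx with hx | hx
      · have e1 : (if g1 ∈ x :: range' (x + 1) L then 1 else 0 : ℕ) = 1 := by
          simp [← hx]
        have e2 : (if g1 ∈ range' (x + 1) L then 1 else 0 : ℕ) = 0 := by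
          rw [if_neg]; rw [← hx]; simp [mem_range'_1]
        have e3 : (if g2 ∈ range' (x + 1) L then 1 else 0 : ℕ)
            ≤ (if g2 ∈ x :: range' (x + 1) L then 1 else 0 : ℕ) := by
          by_cases h : g2 ∈ range' (x + 1) L
          · simp [h, mem_cons]
          · simp [h]
        omega
      · have e1 : (if g2 ∈ x :: range' (x + 1) L then 1 else 0 : ℕ) = 1 := by
          simp [← hx]
        have e2 : (if g2 ∈ range' (x + 1) L then 1 else 0 : ℕ) = 0 := by
          rw [if_neg]; rw [← hx]; simp [mem_range'_1]
        have e3 : (if g1 ∈ range' (x + 1) L then 1 else 0 : ℕ)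
            ≤ (if g1 ∈ x :: range' (x + 1) L then 1 else 0 : ℕ) := by
          by_cases h : g1 ∈ range' (x + 1) L
          · simp [h, mem_cons]
          · simp [h]
        omega
    · push_neg at hx
      have hpx : (if (!(decide (x ∈ [g1, g2]))) = true then 1 else 0 : ℕ) = 1 := by
        simp only [mem_cons, mem_singleton, not_mem_nil, or_false]
        rw [if_pos]
        simp [hx.1, hx.2]
      rw [hpx]
      have e3 : (if g1 ∈ range' (x + 1) L then 1 else 0 : ℕ)
          ≤ (if g1 ∈ x :: range' (x + 1) L then 1 else 0 : ℕ) := by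
        by_cases h : g1 ∈ range' (x + 1) L
        · simp [h, mem_cons]
        · simp [h]
      have e4 : (if g2 ∈ range' (x + 1) L then 1 else 0 : ℕ)
          ≤ (if g2 ∈ x :: range' (x + 1) L then 1 else 0 : ℕ) := by
        by_cases h : g2 ∈ range' (x + 1) L
        · simp [h, mem_cons]
        · simp [h]
      omega

/-- T1 : `ED ≥ 2 - [g1 ∈ v] - [g2 ∈ v]`, in ℕ form. -/
lemma ED_pair_interval_two (g1 g2 x L : ℕ) :
    2 ≤ ED [g1, g2] (range' x L)
      + (if g1 ∈ range' x L then 1 else 0) + (if g2 ∈ range' x L then 1 else 0) := by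
  have h1 := countP_add_length_le_ED (range' x L) [g1, g2]
  have h2 := interval_countP_lower g1 g2 L x
  have hL : (range' x L).length = L := by simp
  simp only [length_cons, length_nil] at h1
  omega

/-- T2 : `ED ≥ L - [g1 ∈ v] - [g2 ∈ v]`, in ℕ form. -/
lemma ED_pair_interval_len (g1 g2 x L : ℕ) :
    L ≤ ED [g1, g2] (range' x L)
      + (if g1 ∈ range' x L then 1 else 0) + (if g2 ∈ range' x L then 1 else 0) := by
  have h1 := countP_notmem_le_ED (range' x L) [g1, g2]
  have h2 := interval_countP_lower g1 g2 L x
  omega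

/-- S : misaligned two-element lists -/
lemma ED_pair_pair_two {g1 g2 w1 w2 : ℕ} (h1 : g1 ≠ w1) (h2 : g2 ≠ w2) :
    2 ≤ ED [g1, g2] [w1, w2] := by
  rw [ED_cons_cons]
  refine le_min ?_ (le_min ?_ ?_)
  · have : ([g2] : List ℕ) ≠ [w1, w2] := by simp
    have := one_le_ED this
    omega
  · have : ([g1, g2] : List ℕ) ≠ [w2] := by simp
    have := one_le_ED this
    omega
  · have : ([g2] : List ℕ) ≠ [w2] := by simp [h2]
    have := one_le_ED this
    rw [if_neg h1]
    omega

end Intervals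

lemma range'_two (x : ℕ) : range' x 2 = [x, x + 1] := rfl

lemma mem_interval {s t : ℕ} (hst : s ≤ t) (g : ℕ) :
    g ∈ range' (s + 1) (t - s) ↔ s < g ∧ g ≤ t := by
  simp [mem_range'_1]; omega

/-- Per-block inequality for `x1`-blocks. -/
lemma PB1 (A : Bool) (m s t c : ℕ) (hst : s ≤ t) (htc : t ≤ c) :
    2 + (if 3*m+3 ≤ t then 1 else 0) ≤
      ED [3*m+1, if A = true then 3*m+2 else 0] (range' (s+1) (t-s))
      + (if A = true ∧ 3*m+2 ≤ c then 1 else 0) + (if 3*m ≤ s then 1 else 0) := by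
  set p := 3*m+1 with hp
  set q := if A = true then 3*m+2 else 0 with hq
  set v := range' (s+1) (t-s) with hv
  have hmem := mem_interval hst
  have h0 : (0 : ℕ) ∉ v := by rw [hv, hmem]; omega
  have hT1 := ED_pair_interval_two p q (s+1) (t-s)
  have hT2 := ED_pair_interval_len p q (s+1) (t-s)
  rw [← hv] at hT1 hT2
  have hem : (if q ∈ v then 1 else 0 : ℕ) ≤ (if A = true ∧ 3*m+2 ≤ c then 1 else 0) := by
    by_cases hqv : q ∈ v
    · have hA : A = true := by
        cases A
        · exfalso; apply h0; simpa [hq] using hqv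
        · rfl
      rw [hA] at hq
      simp only [if_pos] at hq
      rw [if_pos hqv, if_pos ⟨hA, by rw [hq] at hqv; exact le_trans ((hmem _).mp hqv).2 htc⟩]
    · simp [hqv]
  have hplen : (range' (s+1) (t-s)).length = t - s := by simp
  by_cases hT : 3*m+3 ≤ t
  · -- indT = 1 : need ED + em + indS ≥ 3
    rw [if_pos hT]
    by_cases hS : 3*m ≤ s
    · rw [if_pos hS]
      by_cases hem1 : A = true ∧ 3*m+2 ≤ c
      · -- em = 1 : need ED ≥ 1
        rw [if_pos hem1]
        have hne : [p, q] ≠ v := by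
          intro heq
          have hpv : p ∈ v := by rw [← heq]; simp
          have hlv : v.length = 2 := by rw [← heq]; rfl
          rw [hv, hplen] at hlv
          have := ((hmem p).mp hpv).1
          omega
        have := one_le_ED hne
        omega
      · -- em = 0 ; here A must be false
        have hA : A = false := by
          cases A
          · rfl
          · exact absurd ⟨rfl, by omega⟩ hem1
        have hq0 : q = 0 := by rw [hq, hA]; simp
        have hqv : (if q ∈ v then 1 else 0 : ℕ) = 0 := by rw [if_neg]; rw [hq0]; exact h0
        by_cases hPv : p ∈ v
        · -- s = 3m, L ≥ 3
          have h1 := ((hmem p).mp hPv).1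
          have hL3 : 3 ≤ t - s := by rw [hp] at h1; omega
          have hpv1 : (if p ∈ v then 1 else 0 : ℕ) = 1 := if_pos hPv
          omega
        · have hpv0 : (if p ∈ v then 1 else 0 : ℕ) = 0 := if_neg hPv
          omega
    · -- s < 3m : L ≥ 4
      rw [if_neg hS]
      have hL4 : 4 ≤ t - s := by omega
      have h1 : (if p ∈ v then 1 else 0 : ℕ) ≤ 1 := by split <;> omega
      omega
  · -- indT = 0 : need ED + em + indS ≥ 2
    rw [if_neg hT]
    by_cases hPv : p ∈ v
    · have hrange := (hmem p).mp hPv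
      by_cases hS : 3*m ≤ s
      · rw [if_pos hS]
        have hpv1 : (if p ∈ v then 1 else 0 : ℕ) = 1 := if_pos hPv
        omega
      · -- R1 : s < 3m, 3m+1 ≤ t ≤ 3m+2
        rw [if_neg hS]
        by_cases hL3 : 3 ≤ t - s
        · have h1 : (if p ∈ v then 1 else 0 : ℕ) ≤ 1 := by split <;> omega
          omega
        · -- L = 2, s = 3m-1, t = 3m+1, v = [3m, 3m+1]
          have hs : s + 2 = p ∧ t = p := by rw [hp]; omega
          have hL2 : t - s = 2 := by omega
          have hveq : v = [s+1, s+1+1] := by rw [hv, hL2, range'_two]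
          have hS2 : 2 ≤ ED [p, q] v := by
            rw [hveq]
            apply ED_pair_pair_two
            · omega
            · rw [hq]; cases A <;> simp <;> omega
          omega
    · have hpv0 : (if p ∈ v then 1 else 0 : ℕ) = 0 := if_neg hPv
      have h1 : (if 3*m ≤ s then 1 else 0 : ℕ) ≥ 0 := by positivity
      omega

/-- Per-block inequality for `x2`-blocks. -/
lemma PB2 (B : Bool) (m s t : ℕ) (hst : s ≤ t) :
    2 + (if 3*m+4 ≤ t then 1 else 0) ≤
      ED [if B = true then 3*m+2 else 0, 3*m+3] (range' (s+1) (t-s))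
      + (if B = true ∧ s+1 ≤ 3*m+2 then 1 else 0) + (if 3*m+1 ≤ s then 1 else 0) := by
  set q := if B = true then 3*m+2 else 0 with hq
  set r := 3*m+3 with hr
  set v := range' (s+1) (t-s) with hv
  have hmem := mem_interval hst
  have h0 : (0 : ℕ) ∉ v := by rw [hv, hmem]; omega
  have hT1 := ED_pair_interval_two q r (s+1) (t-s)
  have hT2 := ED_pair_interval_len q r (s+1) (t-s)
  rw [← hv] at hT1 hT2
  have hem : (if q ∈ v then 1 else 0 : ℕ) ≤ (if B = true ∧ s+1 ≤ 3*m+2 then 1 else 0) := by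
    by_cases hqv : q ∈ v
    · have hB : B = true := by
        cases B
        · exfalso; apply h0; simpa [hq] using hqv
        · rfl
      rw [hB] at hq
      simp only [if_pos] at hq
      rw [if_pos hqv, if_pos ⟨hB, by rw [hq] at hqv; have := ((hmem _).mp hqv).1; omega⟩]
    · simp [hqv]
  have hplen : (range' (s+1) (t-s)).length = t - s := by simp
  by_cases hT : 3*m+4 ≤ t
  · -- indT = 1 : need ED + em + indS ≥ 3
    rw [if_pos hT]
    by_cases hS : 3*m+1 ≤ s
    · rw [if_pos hS]
      by_cases hem1 : B = true ∧ s+1 ≤ 3*m+2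
      · -- em = 1 : need ED ≥ 1
        rw [if_pos hem1]
        have hne : [q, r] ≠ v := by
          intro heq
          have hqv : q ∈ v := by rw [← heq]; simp
          have hlv : v.length = 2 := by rw [← heq]; rfl
          rw [hv, hplen] at hlv
          have h1 := ((hmem q).mp hqv).1
          have h2 := ((hmem q).mp hqv).2
          -- q = 3m+2 here (q ∈ v excludes 0), s = 3m+1, t = 3m+3 : contradiction with hT
          have hB : q = 3*m+2 := by
            rw [hq]
            rcases hem1 with ⟨hb, _⟩
            rw [hb]
            simp
          omega
        have := one_le_ED hne
        omega
      · -- em = 0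
        have hqv0 : (if q ∈ v then 1 else 0 : ℕ) = 0 := by
          rw [if_neg]
          intro hqv
          apply hem1
          constructor
          · cases B
            · exact absurd (by simpa [hq] using hqv) h0
            · rfl
          · have hB : B = true := by
              cases B
              · exact absurd (by simpa [hq] using hqv) h0
              · rfl
            rw [hB] at hq; simp only [if_pos] at hq
            rw [hq] at hqv
            have := ((hmem _).mp hqv).1
            omega
        by_cases hRv : r ∈ v
        · have h1 := ((hmem r).mp hRv).1
          -- s ≤ 3m+2, so s ∈ {3m+1, 3m+2}; L = t - s ≥ 2
          by_cases hL3 : 3 ≤ t - s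
          · have hrv1 : (if r ∈ v then 1 else 0 : ℕ) = 1 := if_pos hRv
            omega
          · -- L = 2 : s = t-2 ≥ 3m+2 and s ≤ 3m+2 → s = 3m+2, v = [3m+3, 3m+4]
            have hL2 : t - s = 2 := by rw [hr] at h1; omega
            have hveq : v = [s+1, s+1+1] := by rw [hv, hL2, range'_two]
            have hS2 : 2 ≤ ED [q, r] v := by
              rw [hveq]
              apply ED_pair_pair_two
              · rw [hq]; rw [hr] at h1; cases B <;> simp <;> omega
              · rw [hr]; rw [hr] at h1; omega
            omega
        · have hrv0 : (if r ∈ v then 1 else 0 : ℕ) = 0 := if_neg hRv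
          omega
    · -- s ≤ 3m : L ≥ 4
      rw [if_neg hS]
      have hL4 : 4 ≤ t - s := by omega
      have h1 : (if r ∈ v then 1 else 0 : ℕ) ≤ 1 := by split <;> omega
      omega
  · -- indT = 0 : need ED + em + indS ≥ 2
    rw [if_neg hT]
    by_cases hRv : r ∈ v
    · have hrange := (hmem r).mp hRv
      by_cases hS : 3*m+1 ≤ s
      · rw [if_pos hS]
        have hrv1 : (if r ∈ v then 1 else 0 : ℕ) = 1 := if_pos hRv
        omega
      · -- s ≤ 3m, t = 3m+3 : L ≥ 3
        rw [if_neg hS]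
        have hL3 : 3 ≤ t - s := by rw [hr] at hrange; omega
        have hrv1 : (if r ∈ v then 1 else 0 : ℕ) = 1 := if_pos hRv
        omega
    · have hrv0 : (if r ∈ v then 1 else 0 : ℕ) = 0 := if_neg hRv
      have h1 : (if 3*m+1 ≤ s then 1 else 0 : ℕ) ≥ 0 := by positivity
      omega

lemma range'_eq_append {x L : ℕ} {v1 v2 : List ℕ} (h : range' x L = v1 ++ v2) :
    v1 = range' x v1.length ∧ v2 = range' (x + v1.length) (L - v1.length) ∧ v1.length ≤ L := by
  have hlen : L = v1.length + v2.length := by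
    have := congrArg List.length h
    simpa using this
  have hsplit : v1 ++ v2 = range' x v1.length ++ range' (x + v1.length) v2.length := by
    rw [← h, hlen, List.range'_append_1]
  have h1 : v1 = range' x v1.length ∧ v2 = range' (x + v1.length) v2.length := by
    constructor
    · exact List.append_inj_left hsplit (by simp)
    · exact List.append_inj_right hsplit (by simp)
  refine ⟨h1.1, ?_, by omega⟩
  rw [h1.2]
  congr 1
  omega

/-- blocks `m, m+1, …, m+k-1` of `x1` -/
def X1 (a : ℕ → Bool) (m k : ℕ) : List ℕ :=
  ((range' m k).map (fun j => [3*j+1, if alphaP a j then 3*j+2 else 0])).flatten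

/-- blocks `m, m+1, …, m+k-1` of `x2` -/
def X2 (b : ℕ → Bool) (m k : ℕ) : List ℕ :=
  ((range' m k).map (fun j => [if betaP b j then 3*j+2 else 0, 3*j+3])).flatten

def acnt (a : ℕ → Bool) (m k c : ℕ) : ℕ :=
  countP (fun j => alphaP a j && decide (3*j+2 ≤ c)) (range' m k)

def bcnt (b : ℕ → Bool) (m k s : ℕ) : ℕ :=
  countP (fun j => betaP b j && decide (s+1 ≤ 3*j+2)) (range' m k)

lemma claim1 (a : ℕ → Bool) (c : ℕ) : ∀ k m s, s ≤ c →
    2*k ≤ ED (X1 a m k) (range' (s+1) (c-s)) + acnt a m k c + (if 3*m ≤ s then 1 else 0) := by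
  intro k
  induction k with
  | zero => intro m s _; simp
  | succ k ih =>
    intro m s hsc
    have hX : X1 a m (k+1) = [3*m+1, if alphaP a m then 3*m+2 else 0] ++ X1 a (m+1) k := by
      rw [X1, X1, range'_succ]
      simp
    obtain ⟨v1, v2, hsplit, hineq⟩ := ED_append_split (range' (s+1) (c-s))
      [3*m+1, if alphaP a m then 3*m+2 else 0] (X1 a (m+1) k)
    obtain ⟨hv1, hv2, hd⟩ := range'_eq_append hsplit
    set d := v1.length with hdd
    set t := s + d with ht
    have htc : t ≤ c := by omega
    have hv1' : v1 = range' (s+1) (t-s) := by rw [hv1]; congr 1; omega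
    have hv2' : v2 = range' (t+1) (c-t) := by rw [hv2]; congr 1 <;> omega
    have hih := ih (m+1) t htc
    have hpb := PB1 (alphaP a m) m s t c (by omega) htc
    have hacnt : acnt a m (k+1) c =
        (if alphaP a m = true ∧ 3*m+2 ≤ c then 1 else 0) + acnt a (m+1) k c := by
      rw [acnt, acnt, range'_succ, countP_cons]
      have : ((fun j => alphaP a j && decide (3*j+2 ≤ c)) m = true)
          ↔ (alphaP a m = true ∧ 3*m+2 ≤ c) := by simp
      by_cases h : alphaP a m = true ∧ 3*m+2 ≤ c
      · rw [if_pos (this.mpr h), if_pos h]; omega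
      · rw [if_neg (fun hh => h (this.mp hh)), if_neg h]; omega
    have hind : (if 3*(m+1) ≤ t then 1 else 0 : ℕ) = (if 3*m+3 ≤ t then 1 else 0) := by
      by_cases hh : 3*m+3 ≤ t
      · rw [if_pos hh, if_pos (by omega)]
      · rw [if_neg hh, if_neg (by omega)]
    rw [hind] at hih
    rw [← hX] at hineq
    rw [← hv1'] at hpb
    rw [← hv2'] at hih
    rw [hacnt]
    omega

lemma claim2 (b : ℕ → Bool) (e : ℕ) : ∀ k m s, s ≤ e →
    2*k ≤ ED (X2 b m k) (range' (s+1) (e-s)) + bcnt b m k s + (if 3*m+1 ≤ s then 1 else 0) := by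
  intro k
  induction k with
  | zero => intro m s _; simp
  | succ k ih =>
    intro m s hse
    have hX : X2 b m (k+1) = [if betaP b m then 3*m+2 else 0, 3*m+3] ++ X2 b (m+1) k := by
      rw [X2, X2, range'_succ]
      simp
    obtain ⟨v1, v2, hsplit, hineq⟩ := ED_append_split (range' (s+1) (e-s))
      [if betaP b m then 3*m+2 else 0, 3*m+3] (X2 b (m+1) k)
    obtain ⟨hv1, hv2, hd⟩ := range'_eq_append hsplit
    set d := v1.length with hdd
    set t := s + d with ht
    have hte : t ≤ e := by omega
    have hv1' : v1 = range' (s+1) (t-s) := by rw [hv1]; congr 1; omega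
    have hv2' : v2 = range' (t+1) (e-t) := by rw [hv2]; congr 1 <;> omega
    have hih := ih (m+1) t hte
    have hpb := PB2 (betaP b m) m s t (by omega)
    have hbcnt : bcnt b m (k+1) s =
        (if betaP b m = true ∧ s+1 ≤ 3*m+2 then 1 else 0) + bcnt b (m+1) k s := by
      rw [bcnt, bcnt, range'_succ, countP_cons]
      have : ((fun j => betaP b j && decide (s+1 ≤ 3*j+2)) m = true)
          ↔ (betaP b m = true ∧ s+1 ≤ 3*m+2) := by simp
      by_cases h : betaP b m = true ∧ s+1 ≤ 3*m+2
      · rw [if_pos (this.mpr h), if_pos h]; omega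
      · rw [if_neg (fun hh => h (this.mp hh)), if_neg h]; omega
    have hmono : bcnt b (m+1) k t ≤ bcnt b (m+1) k s := by
      rw [bcnt, bcnt]
      apply countP_mono_left
      intro j _ hj
      simp only [Bool.and_eq_true, decide_eq_true_eq] at hj ⊢
      exact ⟨hj.1, by omega⟩
    have hind : (if 3*(m+1)+1 ≤ t then 1 else 0 : ℕ) = (if 3*m+4 ≤ t then 1 else 0) := by
      by_cases hh : 3*m+4 ≤ t
      · rw [if_pos hh, if_pos (by omega)]
      · rw [if_neg hh, if_neg (by omega)]
    rw [hind] at hih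
    rw [← hX] at hineq
    rw [← hv1'] at hpb
    rw [← hv2'] at hih
    rw [hbcnt]
    omega

lemma alphaP_even (a : ℕ → Bool) (N : ℕ) : alphaP a (2*N) = a N := by
  rw [alphaP, if_pos (by omega), show 2*N/2 = N from by omega]

lemma alphaP_odd (a : ℕ → Bool) (N : ℕ) : alphaP a (2*N+1) = !a N := by
  rw [alphaP, if_neg (by omega), show (2*N+1)/2 = N from by omega]

lemma betaP_even (b : ℕ → Bool) (N : ℕ) : betaP b (2*N) = !b N := by
  rw [betaP, if_pos (by omega), show 2*N/2 = N from by omega]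

lemma betaP_odd (b : ℕ → Bool) (N : ℕ) : betaP b (2*N+1) = b N := by
  rw [betaP, if_neg (by omega), show (2*N+1)/2 = N from by omega]

lemma countP_range'_succ (p : ℕ → Bool) (s n : ℕ) :
    countP p (range' s (n+1)) = countP p (range' s n) + (if p (s+n) then 1 else 0) := by
  have h := List.range'_concat (step := 1) (s := s) (n := n)
  rw [h, countP_append]
  simp [countP_cons]
  try split <;> omega

lemma count_pair_bound (a b : ℕ → Bool) (c : ℕ) : ∀ N, (∀ j, j < N → ¬(a j = true ∧ b j = true)) →
    acnt a 0 (2*N) c + bcnt b 0 (2*N) c ≤ N := by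
  intro N
  induction N with
  | zero => intro _; simp [acnt, bcnt]
  | succ N ih =>
    intro h
    have hih := ih (fun j hj => h j (by omega))
    have hN := h N (by omega)
    have e1 : acnt a 0 (2*(N+1)) c = acnt a 0 (2*N) c
        + (if (alphaP a (2*N) && decide (3*(2*N)+2 ≤ c)) then 1 else 0)
        + (if (alphaP a (2*N+1) && decide (3*(2*N+1)+2 ≤ c)) then 1 else 0) := by
      rw [acnt, acnt, show 2*(N+1) = (2*N+1)+1 from by ring,
        countP_range'_succ, countP_range'_succ]
      simp only [Nat.zero_add]
    have e2 : bcnt b 0 (2*(N+1)) c = bcnt b 0 (2*N) c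
        + (if (betaP b (2*N) && decide (c+1 ≤ 3*(2*N)+2)) then 1 else 0)
        + (if (betaP b (2*N+1) && decide (c+1 ≤ 3*(2*N+1)+2)) then 1 else 0) := by
      rw [bcnt, bcnt, show 2*(N+1) = (2*N+1)+1 from by ring,
        countP_range'_succ, countP_range'_succ]
      simp only [Nat.zero_add]
    rw [e1, e2, alphaP_even, alphaP_odd, betaP_even, betaP_odd]
    rcases Bool.eq_false_or_eq_true (a N) with haN | haN <;>
      rcases Bool.eq_false_or_eq_true (b N) with hbN | hbN
    · exact absurd ⟨haN, hbN⟩ hN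
    · rw [haN, hbN]
      simp only [Bool.false_and, Bool.true_and, Bool.not_false, Bool.not_true,
        Bool.false_eq_true, if_false, decide_eq_true_eq]
      split_ifs <;> omega
    · rw [haN, hbN]
      simp only [Bool.false_and, Bool.true_and, Bool.not_false, Bool.not_true,
        Bool.false_eq_true, if_false, decide_eq_true_eq]
      split_ifs <;> omega
    · rw [haN, hbN]
      simp only [Bool.false_and, Bool.true_and, Bool.not_false, Bool.not_true,
        Bool.false_eq_true, if_false, decide_eq_true_eq]
      split_ifs <;> omega

/-- If there is no index `j ∈ {1,…,n}` with `α_j = β_j = 1`, then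
`ED(x1 ∘ x2, y) ≥ 7n − 2`. -/
theorem stmt6 (n : ℕ) (hn : 0 < n) (a b : ℕ → Bool)
    (h : ∀ j < n, ¬(a j = true ∧ b j = true)) :
    7 * n - 2 ≤ ED (x1 n a ++ x2 n b) (ystr n) := by
  have hx1 : x1 n a = X1 a 0 (2*n) := by
    rw [x1, X1, List.range_eq_range']
    congr 1
  have hx2 : x2 n b = X2 b 0 (2*n) := by
    rw [x2, X2, List.range_eq_range']
    congr 1
  obtain ⟨v1, v2, hsplit, hineq⟩ := ED_append_split (ystr n) (x1 n a) (x2 n b)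
  have hsplit' : range' 1 (6*n) = v1 ++ v2 := by rw [← ystr, hsplit]
  obtain ⟨hv1, hv2, hd⟩ := range'_eq_append hsplit'
  set d := v1.length with hdd
  have hv1' : v1 = range' (0+1) (d-0) := by rw [hv1]; congr 1
  have hv2' : v2 = range' (d+1) (6*n-d) := by rw [hv2]; congr 1; omega
  have hc1 := claim1 a d (2*n) 0 0 (by omega)
  have hc2 := claim2 b (6*n) (2*n) 0 d hd
  have hcount := count_pair_bound a b d n h
  rw [hx1, hx2] at hineq ⊢
  rw [← hv1'] at hc1
  rw [← hv2'] at hc2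
  have hi1 : (if 3*0 ≤ 0 then 1 else 0 : ℕ) = 1 := by norm_num
  have hi2 : (if 3*0+1 ≤ d then 1 else 0 : ℕ) ≤ 1 := by split <;> omega
  rw [hi1] at hc1
  omega
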